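/- arXiv:2212.01150 — 6 statements merged into one kernel-verified Lean document; each statement's English description precedes it below -/
import Mathlib

section
/- Let T > 0, w₀, w₁ ∈ ℝ², let w(τ) := e^τ A + e^{−τ} B, and set E' := −2⟨A, B⟩. Then ∫₀^T ‖w'(τ)‖ √(2E' + ‖w(τ)‖²) dτ = (1/2) · (e^T + e^{−T})/(e^T − e^{−T}) · (‖w₀‖² + ‖w₁‖²) − 2⟨w₀, w₁⟩/(e^T − e^{−T}) + T·E'. -/
private lemma lcjl_deriv_w (A B : EuclideanSpace ℝ (Fin 2)) (τ : ℝ) :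
    HasDerivAt (fun τ : ℝ => Real.exp τ • A + Real.exp (-τ) • B)
      (Real.exp τ • A - Real.exp (-τ) • B) τ := by
  have h1 : HasDerivAt (fun τ : ℝ => Real.exp τ • A) (Real.exp τ • A) τ :=
    (Real.hasDerivAt_exp τ).smul_const A
  have he : HasDerivAt (fun τ : ℝ => Real.exp (-τ)) (-Real.exp (-τ)) τ := by
    simpa [Function.comp_def] using ((Real.hasDerivAt_exp (-τ)).comp τ ((hasDerivAt_id τ).neg))
  have h2 : HasDerivAt (fun τ : ℝ => Real.exp (-τ) • B) ((-Real.exp (-τ)) • B) τ :=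
    he.smul_const B
  exact (h1.add h2).congr_deriv (by simp [sub_eq_add_neg, neg_smul])

private lemma lcjl_pointwise (A B : EuclideanSpace ℝ (Fin 2)) (τ : ℝ) :
    ‖deriv (fun τ : ℝ => Real.exp τ • A + Real.exp (-τ) • B) τ‖ *
      Real.sqrt (2 * (-2 * (inner ℝ A B : ℝ)) + ‖Real.exp τ • A + Real.exp (-τ) • B‖^2) =
    Real.exp (2*τ) * ‖A‖^2 + Real.exp (-(2*τ)) * ‖B‖^2 + (-2 * (inner ℝ A B : ℝ)) := by
  have hd := (lcjl_deriv_w A B τ).deriv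
  have hee : Real.exp τ * Real.exp (-τ) = 1 := by rw [← Real.exp_add]; simp
  have h2τ : Real.exp τ * Real.exp τ = Real.exp (2*τ) := by rw [← Real.exp_add]; ring_nf
  have h2τ' : Real.exp (-τ) * Real.exp (-τ) = Real.exp (-(2*τ)) := by
    rw [← Real.exp_add]; ring_nf
  rw [hd]
  have hsq : 2 * (-2 * (inner ℝ A B : ℝ)) + ‖Real.exp τ • A + Real.exp (-τ) • B‖^2
      = ‖Real.exp τ • A - Real.exp (-τ) • B‖^2 := by
    rw [norm_add_sq_real, norm_sub_sq_real]
    simp only [norm_smul, real_inner_smul_left, real_inner_smul_right,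
      Real.norm_eq_abs, sq_abs, mul_pow]
    linear_combination (4*(inner ℝ A B : ℝ)) * hee
  rw [hsq, Real.sqrt_sq (norm_nonneg _), ← sq, norm_sub_sq_real]
  simp only [norm_smul, real_inner_smul_left, real_inner_smul_right,
    Real.norm_eq_abs, sq_abs, mul_pow]
  linear_combination ‖A‖^2 * h2τ + ‖B‖^2 * h2τ' - 2*(inner ℝ A B : ℝ)*hee

private lemma lcjl_integral_aux (T : ℝ) (a b c : ℝ) :
    ∫ τ in (0:ℝ)..T, (Real.exp (2*τ) * a + Real.exp (-(2*τ)) * b + c)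
    = (Real.exp (2*T) - 1)/2 * a + (1 - Real.exp (-(2*T)))/2 * b + T * c := by
  have key : ∀ τ : ℝ, HasDerivAt
      (fun τ : ℝ => Real.exp (2*τ)/2 * a - Real.exp (-(2*τ))/2 * b + τ * c)
      (Real.exp (2*τ) * a + Real.exp (-(2*τ)) * b + c) τ := by
    intro τ
    have hlin : HasDerivAt (fun τ : ℝ => 2*τ) 2 τ := by
      simpa using (hasDerivAt_id τ).const_mul 2
    have h1 : HasDerivAt (fun τ : ℝ => Real.exp (2*τ)) (2 * Real.exp (2*τ)) τ := by
      simpa [mul_comm] using hlin.exp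
    have h2 : HasDerivAt (fun τ : ℝ => Real.exp (-(2*τ))) (-2 * Real.exp (-(2*τ))) τ := by
      simpa [mul_comm] using hlin.neg.exp
    have := (((h1.div_const 2).mul_const a).sub ((h2.div_const 2).mul_const b)).add
      ((hasDerivAt_id τ).mul_const c)
    exact this.congr_deriv (by ring)
  rw [intervalIntegral.integral_eq_sub_of_hasDerivAt (fun τ _ => key τ)
    (by apply Continuous.intervalIntegrable; continuity)]
  simp
  ring

/-- Explicit computation of the regularized Jacobi length of a Keplerian hyperbola in the
Levi-Civita plane: for the harmonic repulsor solution `w(τ) = e^τ A + e^{-τ} B` with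
`w(0) = w₀`, `w(T) = w₁` and energy `E' = -2⟨A, B⟩`,
`∫₀^T ‖w'‖ √(2E' + ‖w‖²) dτ
  = (1/2)(e^T + e^{-T})/(e^T - e^{-T}) (‖w₀‖² + ‖w₁‖²) - 2⟨w₀,w₁⟩/(e^T - e^{-T}) + T E'`. -/
theorem levi_civita_jacobi_length (T : ℝ) (hT : 0 < T)
    (w₀ w₁ : EuclideanSpace ℝ (Fin 2)) :
    let A : EuclideanSpace ℝ (Fin 2) :=
      (Real.exp T - Real.exp (-T))⁻¹ • (w₁ - Real.exp (-T) • w₀)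
    let B : EuclideanSpace ℝ (Fin 2) :=
      (Real.exp T - Real.exp (-T))⁻¹ • (Real.exp T • w₀ - w₁)
    let w : ℝ → EuclideanSpace ℝ (Fin 2) := fun τ => Real.exp τ • A + Real.exp (-τ) • B
    let E' : ℝ := -2 * (inner ℝ A B : ℝ)
    ∫ τ in (0:ℝ)..T, ‖deriv w τ‖ * Real.sqrt (2 * E' + ‖w τ‖^2) =
      (1/2) * ((Real.exp T + Real.exp (-T)) / (Real.exp T - Real.exp (-T)))
          * (‖w₀‖^2 + ‖w₁‖^2)
        - 2 * (inner ℝ w₀ w₁ : ℝ) / (Real.exp T - Real.exp (-T)) + T * E' := by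
  intro A B w E'
  have hint : (∫ τ in (0:ℝ)..T, ‖deriv w τ‖ * Real.sqrt (2 * E' + ‖w τ‖^2))
      = ∫ τ in (0:ℝ)..T,
        (Real.exp (2*τ) * ‖A‖^2 + Real.exp (-(2*τ)) * ‖B‖^2 + (-2 * (inner ℝ A B : ℝ))) := by
    apply intervalIntegral.integral_congr
    intro τ _
    exact lcjl_pointwise A B τ
  rw [hint, lcjl_integral_aux]
  -- now pure algebra
  have hs : Real.exp T ≠ 0 := (Real.exp_pos T).ne'
  have hlt : Real.exp (-T) < Real.exp T := Real.exp_lt_exp.mpr (by linarith)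
  have hd0 : Real.exp T - Real.exp (-T) ≠ 0 := by linarith
  have hA : ‖A‖^2 = (Real.exp T - Real.exp (-T))⁻¹^2 *
      (‖w₁‖^2 - 2 * Real.exp (-T) * (inner ℝ w₀ w₁ : ℝ) + Real.exp (-T)^2 * ‖w₀‖^2) := by
    show ‖(Real.exp T - Real.exp (-T))⁻¹ • (w₁ - Real.exp (-T) • w₀)‖^2 = _
    rw [norm_smul, mul_pow, norm_sub_sq_real]
    simp only [norm_smul, real_inner_smul_right, Real.norm_eq_abs, sq_abs, mul_pow,
      real_inner_comm w₁ w₀]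
    ring
  have hB : ‖B‖^2 = (Real.exp T - Real.exp (-T))⁻¹^2 *
      (Real.exp T^2 * ‖w₀‖^2 - 2 * Real.exp T * (inner ℝ w₀ w₁ : ℝ) + ‖w₁‖^2) := by
    show ‖(Real.exp T - Real.exp (-T))⁻¹ • (Real.exp T • w₀ - w₁)‖^2 = _
    rw [norm_smul, mul_pow, norm_sub_sq_real]
    simp only [norm_smul, real_inner_smul_left, Real.norm_eq_abs, sq_abs, mul_pow]
    ring
  have hAB : (inner ℝ A B : ℝ) = (Real.exp T - Real.exp (-T))⁻¹^2 *
      (Real.exp T * (inner ℝ w₀ w₁ : ℝ) - ‖w₁‖^2 - Real.exp T * Real.exp (-T) * ‖w₀‖^2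
        + Real.exp (-T) * (inner ℝ w₀ w₁ : ℝ)) := by
    show (inner ℝ ((Real.exp T - Real.exp (-T))⁻¹ • (w₁ - Real.exp (-T) • w₀))
      ((Real.exp T - Real.exp (-T))⁻¹ • (Real.exp T • w₀ - w₁)) : ℝ) = _
    simp only [real_inner_smul_left, real_inner_smul_right, inner_sub_left, inner_sub_right,
      real_inner_self_eq_norm_sq, real_inner_comm w₁ w₀]
    ring
  have h2T : Real.exp (2*T) = Real.exp T * Real.exp T := by rw [← Real.exp_add]; ring_nf
  have h2T' : Real.exp (-(2*T)) = Real.exp (-T) * Real.exp (-T) := by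
    rw [← Real.exp_add]; ring_nf
  have hee : Real.exp T * Real.exp (-T) = 1 := by rw [← Real.exp_add]; simp
  show _ + T * (-2 * (inner ℝ A B : ℝ)) = _ - _ + T * (-2 * (inner ℝ A B : ℝ))
  rw [hA, hB, hAB, h2T, h2T']
  simp only [Real.exp_neg]
  have h21 : Real.exp T ^ 2 - 1 ≠ 0 := by
    intro h
    apply hd0
    rw [Real.exp_neg]
    field_simp
    linarith [h]
  rw [show Real.exp T - (Real.exp T)⁻¹ = (Real.exp T ^ 2 - 1) / Real.exp T from by
    field_simp]
  field_simp
  ring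
end

section
/- Let T > 0 and w₀, w₁ ∈ ℝ², set A := (e^T − e^{−T})⁻¹ (w₁ − e^{−T} w₀), B := (e^T − e^{−T})⁻¹ (e^T w₀ − w₁), and suppose E' := −2⟨A, B⟩ > 0. Then (e^T + e^{−T})/2 = −⟨w₀, w₁⟩/(2E') + √( (‖w₀‖² + ‖w₁‖²)/(2E') + (⟨w₀, w₁⟩/(2E'))² + 1 ). -/
/-- For the harmonic repulsor arc with endpoints `w₀, w₁`, transit time `T` and positive
energy `E' = -2⟨A, B⟩`, the quantity `cosh T = (e^T + e^{-T})/2` equals the positive root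
of the quadratic relation `2E'(y² - 1) = ‖w₀‖² + ‖w₁‖² - 2⟨w₀, w₁⟩ y`, namely
`y = -⟨w₀,w₁⟩/(2E') + √((‖w₀‖² + ‖w₁‖²)/(2E') + (⟨w₀,w₁⟩/(2E'))² + 1)`. -/
theorem levi_civita_cosh_formula (T : ℝ) (hT : 0 < T)
    (w₀ w₁ : EuclideanSpace ℝ (Fin 2))
    (A B : EuclideanSpace ℝ (Fin 2))
    (hA : A = (Real.exp T - Real.exp (-T))⁻¹ • (w₁ - Real.exp (-T) • w₀))
    (hB : B = (Real.exp T - Real.exp (-T))⁻¹ • (Real.exp T • w₀ - w₁))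
    (E' : ℝ) (hE' : E' = -2 * (inner ℝ A B : ℝ)) (hEpos : 0 < E') :
    (Real.exp T + Real.exp (-T)) / 2 =
      -(inner ℝ w₀ w₁ : ℝ) / (2 * E') +
        Real.sqrt ((‖w₀‖^2 + ‖w₁‖^2) / (2 * E')
          + ((inner ℝ w₀ w₁ : ℝ) / (2 * E'))^2 + 1) := by
  set s := Real.exp T with hs
  set t := Real.exp (-T) with ht
  have hspos : 0 < s := Real.exp_pos T
  have htpos : 0 < t := Real.exp_pos (-T)
  have hst : s * t = 1 := by rw [hs, ht, ← Real.exp_add]; simp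
  have hd : 0 < s - t := by
    have : t < s := Real.exp_lt_exp.mpr (by linarith)
    linarith
  have hdne : s - t ≠ 0 := ne_of_gt hd
  set p : ℝ := (inner ℝ w₀ w₁ : ℝ) with hp
  set N : ℝ := ‖w₀‖^2 + ‖w₁‖^2 with hN
  set y : ℝ := (s + t) / 2 with hy
  have hy1 : 1 ≤ y := by
    rw [hy]; nlinarith [sq_nonneg (s - t)]
  have hAB : (inner ℝ A B : ℝ) = ((s-t)⁻¹ * (s-t)⁻¹) * ((s + t) * p - N) := by
    rw [hA, hB]
    rw [real_inner_smul_left, real_inner_smul_right]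
    rw [inner_sub_left, inner_sub_right, inner_sub_right,
      real_inner_smul_left, real_inner_smul_right, real_inner_smul_left,
      real_inner_smul_right, real_inner_self_eq_norm_sq, real_inner_self_eq_norm_sq,
      real_inner_comm w₁ w₀]
    have hcomm : (inner ℝ w₁ w₀ : ℝ) = (inner ℝ w₀ w₁ : ℝ) := real_inner_comm w₀ w₁
    rw [hp, hN]
    linear_combination (-(s-t)⁻¹*(s-t)⁻¹*‖w₀‖^2) * hst + ((s+t)*(s-t)⁻¹*(s-t)⁻¹) * hcomm
  have hinv : (s - t)⁻¹ * (s - t) = 1 := inv_mul_cancel₀ hdne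
  have h1 : (s-t)⁻¹ * (s-t)⁻¹ * ((s-t)*(s-t)) = 1 := by
    calc (s-t)⁻¹ * (s-t)⁻¹ * ((s-t)*(s-t))
        = ((s-t)⁻¹*(s-t)) * ((s-t)⁻¹*(s-t)) := by ring
      _ = 1 := by rw [hinv]; ring
  have hE2 : E' * ((s-t)*(s-t)) = 2*(N - (s+t)*p) := by
    rw [hE', hAB]
    linear_combination (-2*((s+t)*p - N)) * h1
  -- the quadratic relation
  have key : 2 * E' * (y^2 - 1) = N - 2 * p * y := by
    rw [hy]
    linear_combination (1/2) * hE2 + (2*E') * hst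
  have hE2pos : (0:ℝ) < 2 * E' := by linarith
  -- Cauchy–Schwarz: N ≥ -2p
  have hCS : -2 * p ≤ N := by
    have h1 : |p| ≤ ‖w₀‖ * ‖w₁‖ := abs_real_inner_le_norm w₀ w₁
    have h2 : -p ≤ |p| := neg_le_abs p
    nlinarith [sq_nonneg (‖w₀‖ - ‖w₁‖)]
  clear_value s t p N y
  -- positivity of y + p/(2E')
  have hyp1 : (0:ℝ) < y + 1 := by linarith
  have h3 : 0 ≤ (y+1) * (2*E'*(y-1) + 2*p) := by
    have := hCS
    nlinarith [key, hCS]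
  have h4 : 0 ≤ 2*E'*(y-1) + 2*p := (mul_nonneg_iff_of_pos_left hyp1).mp h3
  have hEy : 0 ≤ E' * (y+1) := by positivity
  have h5 : 0 ≤ 2*E'*y + p := by linarith only [h4, hEy]
  have hyc : 0 ≤ y + p / (2 * E') := by
    have heq : y + p / (2 * E') = (2*E'*y + p) / (2 * E') := by
      field_simp
    rw [heq]
    exact div_nonneg h5 (le_of_lt hE2pos)
  have hsq : N / (2 * E') + (p / (2 * E'))^2 + 1 = (y + p / (2 * E'))^2 := by
    have hne : (2:ℝ) * E' ≠ 0 := ne_of_gt hE2pos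
    field_simp
    linear_combination (-2*E') * key
  show y = -p / (2 * E') + Real.sqrt (N / (2 * E') + (p / (2 * E'))^2 + 1)
  rw [hsq, Real.sqrt_sq hyc]
  ring
end

section
/- Let p₀, p₁ ∈ ℂ ∖ {0} be not antipodally directed, i.e. the origin does not lie on the line segment joining p₀ and p₁ (equivalently, p₁ is not a negative real multiple of p₀). Then there exist w₀, w₁ ∈ ℂ with w₀² = p₀, w₁² = p₁ and Re(w₀ · conj(w₁)) < 0. -/
/-- Levi-Civita double covering: if `p₀, p₁` are nonzero points of the plane (viewed as `ℂ`)
which are not antipodally directed (the origin does not lie on the segment joining them),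
then one can choose complex square roots `w₀` of `p₀` and `w₁` of `p₁` whose planar inner
product `Re(w₀ · conj w₁)` is negative. -/
theorem levi_civita_square_root_choice (p₀ p₁ : ℂ) (h₀ : p₀ ≠ 0) (h₁ : p₁ ≠ 0)
    (hna : (0 : ℂ) ∉ segment ℝ p₀ p₁) :
    ∃ w₀ w₁ : ℂ, w₀ ^ 2 = p₀ ∧ w₁ ^ 2 = p₁ ∧ (w₀ * (starRingEnd ℂ) w₁).re < 0 := by
  obtain ⟨v₀, hv₀⟩ := IsAlgClosed.exists_pow_nat_eq p₀ (n := 2) (by norm_num)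
  obtain ⟨v₁, hv₁⟩ := IsAlgClosed.exists_pow_nat_eq p₁ (n := 2) (by norm_num)
  have hv₀0 : v₀ ≠ 0 := by rintro rfl; simp at hv₀; exact h₀ hv₀.symm
  have hv₁0 : v₁ ≠ 0 := by rintro rfl; simp at hv₁; exact h₁ hv₁.symm
  set z : ℂ := v₀ * (starRingEnd ℂ) v₁ with hz
  have hz0 : z ≠ 0 := mul_ne_zero hv₀0 (by simpa using hv₁0)
  have hre : z.re ≠ 0 := by
    intro hre0
    -- then z = z.im * I, so z² is real negative, so p₀ = -c • p₁
    have him : z.im ≠ 0 := by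
      intro h; apply hz0; exact Complex.ext hre0 h
    have hz2 : z ^ 2 = p₀ * (starRingEnd ℂ) p₁ := by
      rw [hz, mul_pow, ← map_pow, hv₀, hv₁]
    have hz2' : z ^ 2 = ((-(z.im ^ 2) : ℝ) : ℂ) := by
      apply Complex.ext <;>
        simp [pow_two, Complex.mul_re, Complex.mul_im, hre0]
    have hc : p₀ = ((-(z.im ^ 2) / Complex.normSq p₁ : ℝ) : ℂ) * p₁ := by
      have hns : (Complex.normSq p₁ : ℂ) ≠ 0 := by
        simpa [Complex.normSq_eq_zero] using h₁
      have h1 : p₀ * (starRingEnd ℂ) p₁ * p₁ = ((-(z.im ^ 2) : ℝ) : ℂ) * p₁ := by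
        rw [← hz2, hz2']
      have h2 : p₀ * (Complex.normSq p₁ : ℂ) = ((-(z.im ^ 2) : ℝ) : ℂ) * p₁ := by
        rw [← Complex.mul_conj]; linear_combination h1
      field_simp
      push_cast at h2 ⊢
      field_simp
      linear_combination h2
    apply hna
    set c : ℝ := z.im ^ 2 / Complex.normSq p₁ with hcdef
    have hcpos : 0 < c := div_pos (by positivity) (by
      have := Complex.normSq_pos.mpr h₁; exact this)
    have hc' : p₀ = (-c : ℝ) * p₁ := by
      rw [hc, hcdef]; push_cast; ring
    refine ⟨1 / (1 + c), c / (1 + c), by positivity, by positivity, ?_, ?_⟩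
    · field_simp
    · rw [Complex.real_smul, Complex.real_smul, hc']
      push_cast
      field_simp
      ring
  rcases lt_or_gt_of_ne hre with h | h
  · exact ⟨v₀, v₁, hv₀, hv₁, h⟩
  · refine ⟨-v₀, v₁, by rw [neg_pow, hv₀]; ring, hv₁, ?_⟩
    simpa [hz] using neg_neg_iff_pos.mpr h
end

section
/- Let E' ∈ ℝ and let w : ℝ → ℂ be twice differentiable with w''(τ) = w(τ) and w(τ) ≠ 0 for all τ, and (1/2)|w'(τ)|² − (1/2)|w(τ)|² = E' for all τ. Define z := w². Then the function g(τ) := z'(τ)/(√2 · |w(τ)|²) is differentiable with g'(τ) = −2√2 · E' · z(τ)/|z(τ)|² for all τ; equivalently, (1/(√2 |w(τ)|²)) · (d/dτ) ( z'(τ)/(√2 |w(τ)|²) ) = −2E' · z(τ)/|z(τ)|³, so that in the rescaled time ds = √2 |w|² dτ the curve z solves the Kepler equation z'' = −2E' z/‖z‖³. -/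
/-- Levi-Civita transformation: if `w : ℝ → ℂ` is a zero-free solution of the harmonic
repulsor `w'' = w` with energy `E' = (1/2)|w'|² - (1/2)|w|²`, then, setting `z = w²`,
the function `g(τ) = z'(τ)/(√2 |w(τ)|²)` is differentiable with
`g'(τ) = -2√2 E' z(τ)/|z(τ)|²`; i.e. in the rescaled time `ds = √2 |w|² dτ` the curve `z`
solves the Kepler equation `z'' = -2E' z/‖z‖³`. -/
theorem levi_civita_kepler_equation (E' : ℝ) (w : ℝ → ℂ)
    (hw₁ : Differentiable ℝ w) (hw₂ : Differentiable ℝ (deriv w))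
    (hrep : ∀ τ : ℝ, deriv (deriv w) τ = w τ)
    (hne : ∀ τ : ℝ, w τ ≠ 0)
    (hE : ∀ τ : ℝ, (1/2) * ‖deriv w τ‖^2
      - (1/2) * ‖w τ‖^2 = E') :
    let z : ℝ → ℂ := fun τ => (w τ)^2
    let g : ℝ → ℂ := fun τ => deriv z τ / ((Real.sqrt 2 * ‖w τ‖^2 : ℝ) : ℂ)
    ∀ τ : ℝ, HasDerivAt g
      (((-2 * Real.sqrt 2 * E' : ℝ) : ℂ) * z τ / ((‖z τ‖^2 : ℝ) : ℂ)) τ := by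
  intro z g τ
  have hw : ∀ s, HasDerivAt w (deriv w s) s := fun s => (hw₁ s).hasDerivAt
  have hu : ∀ s, HasDerivAt (deriv w) (w s) s := fun s => by
    have := (hw₂ s).hasDerivAt
    rwa [hrep s] at this
  have h2 : (Real.sqrt 2 : ℂ) * (Real.sqrt 2 : ℂ) = 2 := by
    norm_cast
    exact Real.mul_self_sqrt (by norm_num)
  have hs2 : (Real.sqrt 2 : ℂ) ≠ 0 := by
    simp [Complex.ofReal_ne_zero, Real.sqrt_ne_zero']
  have hcw : ∀ s, ((‖w s‖ ^ 2 : ℝ) : ℂ) = w s * star (w s) := fun s => by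
    rw [Complex.sq_norm]
    exact (Complex.mul_conj _).symm
  have hstarne : ∀ s, star (w s) ≠ 0 := fun s => star_ne_zero.mpr (hne s)
  have hz : ∀ s, deriv z s = 2 * w s * deriv w s := fun s => by
    have h : HasDerivAt z (deriv w s * w s + w s * deriv w s) s := by
      have hzfun : z = fun t => w t * w t := by funext t; exact pow_two (w t)
      rw [hzfun]
      exact (hw s).mul (hw s)
    rw [h.deriv]; ring
  -- g equals √2 w' / conj w
  have hgh : g = fun s => (Real.sqrt 2 : ℂ) * deriv w s / star (w s) := by
    funext s
    show deriv z s / ((Real.sqrt 2 * ‖w s‖^2 : ℝ) : ℂ) = _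
    rw [hz s, Complex.ofReal_mul, hcw s]
    have hden : (Real.sqrt 2 : ℂ) * (w s * star (w s)) ≠ 0 :=
      mul_ne_zero hs2 (mul_ne_zero (hne s) (hstarne s))
    rw [div_eq_div_iff hden (hstarne s), ← h2]
    ring
  -- derivative of √2 w' / conj w
  have hd : HasDerivAt (fun s => (Real.sqrt 2 : ℂ) * deriv w s / star (w s))
      (((Real.sqrt 2 : ℂ) * w τ * star (w τ)
        - (Real.sqrt 2 : ℂ) * deriv w τ * star (deriv w τ)) / (star (w τ))^2) τ :=
    ((hu τ).const_mul _).div (hw τ).star (hstarne τ)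
  -- energy identity
  have hEc : deriv w τ * star (deriv w τ) = w τ * star (w τ) + 2 * E' := by
    have hr : (‖deriv w τ‖)^2 = (‖w τ‖)^2 + 2*E' := by
      linarith [hE τ]
    calc deriv w τ * star (deriv w τ)
        = ((‖deriv w τ‖ ^ 2 : ℝ) : ℂ) := by
          rw [Complex.sq_norm]; exact Complex.mul_conj _
      _ = ((‖w τ‖ ^ 2 : ℝ) : ℂ) + 2*E' := by rw [hr]; push_cast; ring
      _ = w τ * star (w τ) + 2*E' := by rw [hcw τ]
  have hcz : ((‖z τ‖ ^ 2 : ℝ) : ℂ) = (w τ)^2 * (star (w τ))^2 := by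
    show ((‖(w τ)^2‖ ^ 2 : ℝ) : ℂ) = _
    rw [Complex.sq_norm]
    rw [← Complex.mul_conj]
    simp [star_pow]
  rw [hgh]
  convert hd using 1
  show ((-2 * Real.sqrt 2 * E' : ℝ) : ℂ) * (w τ)^2 / ((‖z τ‖^2 : ℝ) : ℂ) = _
  rw [hcz]
  have hwne := hne τ
  have hswne := hstarne τ
  rw [div_eq_div_iff (mul_ne_zero (pow_ne_zero 2 hwne) (pow_ne_zero 2 hswne))
    (pow_ne_zero 2 hswne)]
  push_cast
  linear_combination ((Real.sqrt 2:ℂ) * w τ^2 * star (w τ)^2) * hEc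
end

section
/- Let E' ∈ ℝ and let w : ℝ → ℂ be twice differentiable with w''(τ) = w(τ) and w(τ) ≠ 0 for all τ, and (1/2)|w'(τ)|² − (1/2)|w(τ)|² = E' for all τ. Define z := w². Then for every τ, (1/2) · | z'(τ)/(√2 |w(τ)|²) |² − 2E'/|z(τ)| = 1; i.e. in the rescaled time ds = √2 |w|² dτ the curve z has Keplerian energy 1 with gravitational parameter 2E'. -/
/-- Levi-Civita transformation, energy relation: if `w : ℝ → ℂ` is a zero-free solution of
the harmonic repulsor `w'' = w` with energy `E' = (1/2)|w'|² - (1/2)|w|²`, then, setting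
`z = w²`, for every `τ` one has `(1/2)|z'(τ)/(√2 |w(τ)|²)|² - 2E'/|z(τ)| = 1`; i.e. in
the rescaled time `ds = √2 |w|² dτ` the curve `z` has Keplerian energy `1` with
gravitational parameter `2E'`. -/
theorem levi_civita_kepler_energy (E' : ℝ) (w : ℝ → ℂ)
    (hw₁ : Differentiable ℝ w) (hw₂ : Differentiable ℝ (deriv w))
    (hrep : ∀ τ : ℝ, deriv (deriv w) τ = w τ)
    (hne : ∀ τ : ℝ, w τ ≠ 0)
    (hE : ∀ τ : ℝ, (1/2) * ‖deriv w τ‖^2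
      - (1/2) * ‖w τ‖^2 = E') :
    let z : ℝ → ℂ := fun τ => (w τ)^2
    ∀ τ : ℝ,
      (1/2) * (‖deriv z τ / ((Real.sqrt 2 * ‖w τ‖^2 : ℝ) : ℂ)‖)^2
        - 2 * E' / ‖z τ‖ = 1 := by
  intro z τ
  have hderiv : deriv z τ = 2 * w τ * deriv w τ := by
    have h := ((hw₁ τ).hasDerivAt.mul (hw₁ τ).hasDerivAt)
    have h2 : HasDerivAt z (deriv w τ * w τ + w τ * deriv w τ) τ := by
      simpa [z, sq, Pi.mul_def] using h
    rw [h2.deriv]; ring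
  have hwpos : (0:ℝ) < ‖w τ‖ := by
    simpa [norm_pos_iff] using (hne τ)
  have h2 : (0:ℝ) < Real.sqrt 2 := by positivity
  have hE' : ‖deriv w τ‖^2 = 2 * E' + ‖w τ‖^2 := by
    have := hE τ; linarith
  rw [hderiv]
  simp only [z, norm_div, norm_mul, norm_pow, Complex.norm_real, Real.norm_eq_abs, Complex.norm_two,
    Complex.norm_natCast]
  rw [abs_of_pos h2, abs_norm]
  have hs : Real.sqrt 2 ^ 2 = 2 := Real.sq_sqrt (by norm_num)
  have key : (Real.sqrt 2 * ‖w τ‖^2)^2 = 2 * ‖w τ‖^4 := by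
    rw [mul_pow, hs]; ring
  rw [div_pow, key]
  field_simp
  nlinarith [sq_nonneg (‖w τ‖)]
end

section
/- Fix 𝓔, ω > 0, a vector u ∈ ℝ² with ‖u‖ = 1, and r₀ with 0 < r₀ < √(2𝓔)/ω. Set β := √(2𝓔/ω² − r₀²), z(s) := (r₀ cos(ωs) + β sin(ωs)) · u, and T := (2/ω) · arctan(β/r₀). Then: (i) z''(s) = −ω² z(s) for all s; (ii) (1/2)‖z'(s)‖² − 𝓔 + (ω²/2)‖z(s)‖² = 0 for all s (zero-energy condition for the outer potential); (iii) z(0) = z(T) = r₀·u; (iv) z'(T) = −z'(0); (v) ‖z(s)‖ > r₀ for all s ∈ (0, T). -/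
/-- The explicit radial (homothetic) zero-energy outer arc for the potential
`V_E(z) = 𝓔 - (ω²/2)‖z‖²`: with `β = √(2𝓔/ω² - r₀²)`,
`z(s) = (r₀ cos(ωs) + β sin(ωs)) u` and `T = (2/ω) arctan(β/r₀)`, the curve `z` solves
`z'' = -ω² z` with zero energy, leaves the circle of radius `r₀` in the unit direction `u`
at `s = 0`, returns to the same point at `s = T` with reversed velocity, and stays outside
the circle of radius `r₀` for `s ∈ (0, T)`. -/
theorem homothetic_outer_arc (𝓔 ω : ℝ) (h𝓔 : 0 < 𝓔) (hω : 0 < ω)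
    (u : EuclideanSpace ℝ (Fin 2)) (hu : ‖u‖ = 1)
    (r₀ : ℝ) (hr₀ : 0 < r₀) (hr₀' : r₀ < Real.sqrt (2 * 𝓔) / ω) :
    let β : ℝ := Real.sqrt (2 * 𝓔 / ω^2 - r₀^2)
    let z : ℝ → EuclideanSpace ℝ (Fin 2) :=
      fun s => (r₀ * Real.cos (ω * s) + β * Real.sin (ω * s)) • u
    let T : ℝ := (2 / ω) * Real.arctan (β / r₀)
    (∀ s : ℝ, deriv (deriv z) s = (-ω^2) • z s) ∧
    (∀ s : ℝ, (1/2) * ‖deriv z s‖^2 - 𝓔 + (ω^2/2) * ‖z s‖^2 = 0) ∧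
    (z 0 = r₀ • u ∧ z T = r₀ • u) ∧
    (deriv z T = -(deriv z 0)) ∧
    (∀ s ∈ Set.Ioo (0:ℝ) T, r₀ < ‖z s‖) := by
  intro β z T
  have hβdef : β = Real.sqrt (2 * 𝓔 / ω^2 - r₀^2) := rfl
  have hTdef : T = (2 / ω) * Real.arctan (β / r₀) := rfl
  have hzdef : z = fun s => (r₀ * Real.cos (ω * s) + β * Real.sin (ω * s)) • u := rfl
  have hω2 : (0:ℝ) < ω^2 := by positivity
  -- r₀² < 2𝓔/ω²
  have h1 : r₀^2 < 2 * 𝓔 / ω^2 := by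
    have h2 : r₀ * ω < Real.sqrt (2 * 𝓔) := (lt_div_iff₀ hω).mp hr₀'
    have h3 : (r₀ * ω)^2 < (Real.sqrt (2 * 𝓔))^2 :=
      pow_lt_pow_left₀ h2 (by positivity) two_ne_zero
    rw [Real.sq_sqrt (by positivity)] at h3
    rw [lt_div_iff₀ hω2]; nlinarith
  have hβsq : β^2 = 2 * 𝓔 / ω^2 - r₀^2 := by
    rw [hβdef, Real.sq_sqrt (by linarith)]
  have hβpos : 0 < β := by
    rw [hβdef]; exact Real.sqrt_pos.mpr (by linarith)
  have hβ2 : β^2 * ω^2 = 2 * 𝓔 - r₀^2 * ω^2 := by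
    rw [hβsq]; field_simp
  -- derivatives
  set f : ℝ → ℝ := fun s => r₀ * Real.cos (ω * s) + β * Real.sin (ω * s) with hfdef
  set g : ℝ → ℝ := fun s => ω * (-r₀ * Real.sin (ω * s) + β * Real.cos (ω * s)) with hgdef
  have hlin : ∀ s : ℝ, HasDerivAt (fun t => ω * t) ω s := fun s => by
    simpa using (hasDerivAt_id s).const_mul ω
  have hcos : ∀ s : ℝ, HasDerivAt (fun t => Real.cos (ω * t)) (-Real.sin (ω * s) * ω) s :=
    fun s => (Real.hasDerivAt_cos (ω * s)).comp s (hlin s)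
  have hsin : ∀ s : ℝ, HasDerivAt (fun t => Real.sin (ω * t)) (Real.cos (ω * s) * ω) s :=
    fun s => (Real.hasDerivAt_sin (ω * s)).comp s (hlin s)
  have hf : ∀ s : ℝ, HasDerivAt f (g s) s := fun s => by
    have h := ((hcos s).const_mul r₀).add ((hsin s).const_mul β)
    refine h.congr_deriv ?_
    simp only [hgdef]; ring
  have hg : ∀ s : ℝ, HasDerivAt g (-ω^2 * f s) s := fun s => by
    have h := (((hsin s).const_mul (-r₀)).add ((hcos s).const_mul β)).const_mul ω
    refine h.congr_deriv ?_
    simp only [hfdef]; ring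
  have hz : ∀ s : ℝ, HasDerivAt z (g s • u) s := fun s => (hf s).smul_const u
  have hderiv : deriv z = fun s => g s • u := funext fun s => (hz s).deriv
  have hderiv2 : ∀ s : ℝ, deriv (deriv z) s = (-ω^2 * f s) • u := fun s => by
    rw [hderiv]
    exact ((hg s).smul_const u).deriv
  have hnorm : ∀ c : ℝ, ‖c • u‖^2 = c^2 := fun c => by
    rw [norm_smul, hu, mul_one, Real.norm_eq_abs, sq_abs]
  -- arctan facts
  set φ : ℝ := Real.arctan (β / r₀) with hφdef
  have hφpos : 0 < φ := by
    have := Real.arctan_strictMono (show (0:ℝ) < β / r₀ by positivity)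
    simpa [Real.arctan_zero, hφdef] using this
  have hφlt : φ < Real.pi / 2 := Real.arctan_lt_pi_div_two _
  have hcpos : 0 < Real.cos φ := Real.cos_pos_of_mem_Ioo ⟨by linarith, hφlt⟩
  have hccc : Real.cos φ ^ 2 * (r₀^2 + β^2) = r₀^2 := by
    rw [hφdef, Real.cos_sq_arctan]
    field_simp
  have hs : Real.sin φ * r₀ = β * Real.cos φ := by
    have h := Real.tan_arctan (β / r₀)
    rw [Real.tan_eq_sin_div_cos] at h
    rw [← hφdef] at h
    field_simp [hcpos.ne'] at h
    linarith
  have hωT : ω * T = 2 * φ := by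
    rw [hTdef]; field_simp
  refine ⟨?_, ?_, ⟨?_, ?_⟩, ?_, ?_⟩
  · -- z'' = -ω² z
    intro s
    rw [hderiv2 s, hzdef]
    simp only [← smul_smul]; rfl
  · -- energy
    intro s
    rw [hderiv, hzdef]
    simp only [hnorm]
    have key := Real.sin_sq_add_cos_sq (ω * s)
    simp only [hgdef]
    linear_combination (ω^2 / 2 * (r₀^2 + β^2)) * key + (1/2) * hβ2
  · rw [hzdef]; simp
  · -- z T = r₀ • u
    rw [hzdef]
    simp only
    rw [hωT, Real.cos_two_mul, Real.sin_two_mul]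
    congr 1
    have h2 : r₀ * (r₀ * (2 * Real.cos φ ^ 2 - 1) + β * (2 * Real.sin φ * Real.cos φ)) = r₀ * r₀ := by
      linear_combination 2 * hccc + (2 * β * Real.cos φ) * hs
    exact mul_left_cancel₀ hr₀.ne' h2
  · -- reversed velocity
    rw [hderiv]
    simp only [← neg_smul]
    congr 1
    simp only [hgdef]
    rw [hωT, Real.cos_two_mul, Real.sin_two_mul]
    simp only [mul_zero, Real.sin_zero, Real.cos_zero]
    linear_combination (-2 * ω * Real.cos φ) * hs
  · -- stays outside
    intro s hsmem
    obtain ⟨hs0, hsT⟩ := hsmem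
    rw [hzdef]
    simp only
    rw [norm_smul, hu, mul_one, Real.norm_eq_abs]
    have ha : ω * s = 2 * (ω * s / 2) := by ring
    set a : ℝ := ω * s / 2 with hadef
    have ha0 : 0 < a := by positivity
    have haφ : a < φ := by
      have : ω * s < ω * T := by exact mul_lt_mul_of_pos_left hsT hω
      rw [hωT] at this
      simp only [hadef]; linarith
    have hsina : 0 < Real.sin a := Real.sin_pos_of_pos_of_lt_pi ha0 (by linarith [Real.pi_gt_three])
    have hcosa : 0 < Real.cos a := Real.cos_pos_of_mem_Ioo ⟨by linarith, by linarith⟩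
    have htan : Real.tan a < Real.tan φ :=
      Real.tan_lt_tan_of_nonneg_of_lt_pi_div_two ha0.le hφlt haφ
    rw [Real.tan_arctan] at htan
    rw [Real.tan_eq_sin_div_cos, div_lt_div_iff₀ hcosa hr₀] at htan
    -- r₀ sin a < β cos a
    have hkey : 0 < Real.sin a * (β * Real.cos a - r₀ * Real.sin a) := by
      apply mul_pos hsina
      linarith
    have hlt : r₀ < r₀ * Real.cos (ω * s) + β * Real.sin (ω * s) := by
      rw [ha, Real.cos_two_mul, Real.sin_two_mul]
      nlinarith [Real.sin_sq_add_cos_sq a]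
    calc r₀ < r₀ * Real.cos (ω * s) + β * Real.sin (ω * s) := hlt
      _ ≤ |r₀ * Real.cos (ω * s) + β * Real.sin (ω * s)| := le_abs_self _
end
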